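/- Every finite-dimensional simple module M over U_q(sl*₂) is one-dimensional, with K acting by some scalar λ ∈ ℂ× and E, F acting by zero. -/

import Mathlib

noncomputable section

/-- `q` is not a root of unity (in particular nonzero). -/
def NotRootOfUnity (q : ℂ) : Prop := q ≠ 0 ∧ ∀ n : ℕ, 0 < n → q ^ n ≠ 1

/-- Defining relations of the Hopf PBW-deformation `U_q(sl*₂, κ)`: generators
`0 = K`, `1 = K⁻¹`, `2 = E`, `3 = F`, relations `KK⁻¹ = K⁻¹K = 1`, `KE = q²EK`,
`KF = q⁻²FK`, `EF - FE = a(Kᵐ - K⁻ᵐ)`.  The case `a = 0` is `U_q(sl*₂)` itself. -/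
inductive UqRel (q a : ℂ) (m : ℕ) : FreeAlgebra ℂ (Fin 4) → FreeAlgebra ℂ (Fin 4) → Prop
  | KKinv : UqRel q a m (FreeAlgebra.ι ℂ 0 * FreeAlgebra.ι ℂ 1) 1
  | KinvK : UqRel q a m (FreeAlgebra.ι ℂ 1 * FreeAlgebra.ι ℂ 0) 1
  | KE : UqRel q a m (FreeAlgebra.ι ℂ 0 * FreeAlgebra.ι ℂ 2)
      (q ^ 2 • (FreeAlgebra.ι ℂ 2 * FreeAlgebra.ι ℂ 0))
  | KF : UqRel q a m (FreeAlgebra.ι ℂ 0 * FreeAlgebra.ι ℂ 3)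
      ((q ^ 2)⁻¹ • (FreeAlgebra.ι ℂ 3 * FreeAlgebra.ι ℂ 0))
  | EF : UqRel q a m (FreeAlgebra.ι ℂ 2 * FreeAlgebra.ι ℂ 3)
      (FreeAlgebra.ι ℂ 3 * FreeAlgebra.ι ℂ 2 +
        a • (FreeAlgebra.ι ℂ 0 ^ m - FreeAlgebra.ι ℂ 1 ^ m))

/-- The algebra `U_q(sl*₂, κ)`; `a = 0` gives the new type quantum group `U_q(sl*₂)`. -/
abbrev Uq (q a : ℂ) (m : ℕ) : Type := RingQuot (UqRel q a m)

def genK (q a : ℂ) (m : ℕ) : Uq q a m := RingQuot.mkAlgHom ℂ (UqRel q a m) (FreeAlgebra.ι ℂ 0)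
def genKinv (q a : ℂ) (m : ℕ) : Uq q a m := RingQuot.mkAlgHom ℂ (UqRel q a m) (FreeAlgebra.ι ℂ 1)
def genE (q a : ℂ) (m : ℕ) : Uq q a m := RingQuot.mkAlgHom ℂ (UqRel q a m) (FreeAlgebra.ι ℂ 2)
def genF (q a : ℂ) (m : ℕ) : Uq q a m := RingQuot.mkAlgHom ℂ (UqRel q a m) (FreeAlgebra.ι ℂ 3)

/-- Chain lemma: if `k * g = r • (g * k)` with `r` nonzero and not a root of unity,
and `v` is a nonzero eigenvector of `k` with nonzero eigenvalue `μ`, then some `g ^ n • v`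
is a nonzero eigenvector of `k` killed by `g`. -/
theorem chain_lemma {M : Type} [AddCommGroup M] [Module ℂ M] [FiniteDimensional ℂ M]
    (k g : Module.End ℂ M) (r : ℂ) (hr0 : r ≠ 0) (hr : ∀ n : ℕ, 0 < n → r ^ n ≠ 1)
    (hrel : k * g = r • (g * k)) (μ : ℂ) (hμ : μ ≠ 0) (v : M) (hv : v ≠ 0)
    (heig : k v = μ • v) :
    ∃ w : M, w ≠ 0 ∧ g w = 0 ∧ (∃ ν : ℂ, ν ≠ 0 ∧ k w = ν • w) ∧ ∃ n : ℕ, w = (g ^ n) v := by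
  have key : ∀ n : ℕ, k ((g ^ n) v) = (r ^ n * μ) • (g ^ n) v := by
    intro n
    induction n with
    | zero => simpa using heig
    | succ n ih =>
      have h1 : (g ^ (n + 1)) v = g ((g ^ n) v) := by
        rw [pow_succ']; rfl
      rw [h1]
      have h2 : k (g ((g ^ n) v)) = r • g (k ((g ^ n) v)) := by
        have := congrArg (fun f : Module.End ℂ M => f ((g ^ n) v)) hrel
        simpa using this
      rw [h2, ih, map_smul, smul_smul]
      congr 1
      ring
  have hex : ∃ n : ℕ, (g ^ n) v = 0 := by
    by_contra hno
    push_neg at hno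
    have hinj : Function.Injective (fun n : ℕ => r ^ n * μ) := by
      intro a b hab
      by_contra hne
      rcases Nat.lt_or_ge a b with h | h
      · have : r ^ a * μ = r ^ b * μ := hab
        have hpow : r ^ a = r ^ b := mul_right_cancel₀ hμ this
        have : r ^ (b - a) = 1 := by
          have hb : r ^ b = r ^ a * r ^ (b - a) := by
            rw [← pow_add]; congr 1; omega
          rw [hb] at hpow
          exact (mul_left_cancel₀ (pow_ne_zero a hr0)
            (by rw [mul_one]; exact hpow)).symm
        exact hr (b - a) (by omega) this
      · rcases Nat.lt_or_ge b a with h' | h'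
        · have hpow : r ^ a = r ^ b := mul_right_cancel₀ hμ hab
          have : r ^ (a - b) = 1 := by
            have hb : r ^ a = r ^ b * r ^ (a - b) := by
              rw [← pow_add]; congr 1; omega
            rw [hb] at hpow
            exact (mul_left_cancel₀ (pow_ne_zero b hr0)
              (by rw [mul_one]; exact hpow.symm)).symm
          exact hr (a - b) (by omega) this
        · exact hne (by omega)
    have hli : LinearIndependent ℂ (fun n : ℕ => (g ^ n) v) := by
      apply k.eigenvectors_linearIndependent' (fun n : ℕ => r ^ n * μ) hinj
      intro n
      exact ⟨Module.End.mem_eigenspace_iff.2 (key n), hno n⟩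
    have : Finite ℕ := hli.finite_of_isNoetherian
    exact not_finite ℕ
  classical
  set N := Nat.find hex with hN
  have hN0 : (g ^ N) v = 0 := Nat.find_spec hex
  have hNpos : 0 < N := by
    rcases Nat.eq_zero_or_pos N with h | h
    · exfalso; apply hv; simpa [h] using hN0
    · exact h
  refine ⟨(g ^ (N - 1)) v, ?_, ?_, ⟨r ^ (N - 1) * μ, ?_, key _⟩, N - 1, rfl⟩
  · exact Nat.find_min hex (by omega)
  · have : g ((g ^ (N - 1)) v) = (g ^ N) v := by
      rw [← Module.End.mul_apply, ← pow_succ']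
      congr 2
      omega
    rw [this, hN0]
  · exact mul_ne_zero (pow_ne_zero _ hr0) hμ

/-- every finite-dimensional simple `U_q(sl*₂)`-module is one-dimensional,
with `K` acting by a nonzero scalar and `E`, `F` acting by zero. -/
theorem stmt3 (q : ℂ) (hq : NotRootOfUnity q)
    (M : Type) [AddCommGroup M] [Module ℂ M] [Module (Uq q 0 1) M]
    [IsScalarTower ℂ (Uq q 0 1) M] [FiniteDimensional ℂ M]
    (hsimple : IsSimpleModule (Uq q 0 1) M) :
    Module.finrank ℂ M = 1 ∧
      ∃ lam : ℂ, lam ≠ 0 ∧ ∀ v : M,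
        genK q 0 1 • v = lam • v ∧ genE q 0 1 • v = 0 ∧ genF q 0 1 • v = 0 := by
  obtain ⟨hq0, hqru⟩ := hq
  haveI hscc : SMulCommClass ℂ (Uq q 0 1) M := by
    constructor
    intro c u v
    have h1 : c • (u • v) = (algebraMap ℂ (Uq q 0 1) c * u) • v := by
      rw [mul_smul, algebraMap_smul]
    have h2 : u • (c • v) = (u * algebraMap ℂ (Uq q 0 1) c) • v := by
      rw [mul_smul, algebraMap_smul]
    rw [h1, h2, Algebra.commutes]
  haveI : SMulCommClass (Uq q 0 1) ℂ M := SMulCommClass.symm _ _ _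
  set ρ : Uq q 0 1 →ₐ[ℂ] Module.End ℂ M := Algebra.lsmul ℂ ℂ M with hρ
  set kL : Module.End ℂ M := ρ (genK q 0 1) with hkL
  set kiL : Module.End ℂ M := ρ (genKinv q 0 1) with hkiL
  set eL : Module.End ℂ M := ρ (genE q 0 1) with heL
  set fL : Module.End ℂ M := ρ (genF q 0 1) with hfL
  have actK : ∀ v : M, kL v = genK q 0 1 • v := fun _ => rfl
  have actKi : ∀ v : M, kiL v = genKinv q 0 1 • v := fun _ => rfl
  have actE : ∀ v : M, eL v = genE q 0 1 • v := fun _ => rfl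
  have actF : ∀ v : M, fL v = genF q 0 1 • v := fun _ => rfl
  -- relations in Uq
  have relKKi : genKinv q 0 1 * genK q 0 1 = 1 := by
    have h := RingQuot.mkAlgHom_rel ℂ (UqRel.KinvK (q := q) (a := 0) (m := 1))
    rw [map_mul, map_one] at h
    exact h
  have relKE : genK q 0 1 * genE q 0 1 = q ^ 2 • (genE q 0 1 * genK q 0 1) := by
    have h := RingQuot.mkAlgHom_rel ℂ (UqRel.KE (q := q) (a := 0) (m := 1))
    rw [map_mul, map_smul, map_mul] at h
    exact h
  have relKF : genK q 0 1 * genF q 0 1 = (q ^ 2)⁻¹ • (genF q 0 1 * genK q 0 1) := by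
    have h := RingQuot.mkAlgHom_rel ℂ (UqRel.KF (q := q) (a := 0) (m := 1))
    rw [map_mul, map_smul, map_mul] at h
    exact h
  have relEF : genE q 0 1 * genF q 0 1 = genF q 0 1 * genE q 0 1 := by
    have h := RingQuot.mkAlgHom_rel ℂ (UqRel.EF (q := q) (a := 0) (m := 1))
    rw [map_mul, map_add, map_mul, map_smul] at h
    simp at h
    exact h
  -- relations for the endomorphisms
  have ereKKi : kiL * kL = 1 := by
    rw [hkiL, hkL, ← map_mul, relKKi, map_one]
  have ereKE : kL * eL = q ^ 2 • (eL * kL) := by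
    rw [hkL, heL, ← map_mul, relKE, map_smul, map_mul]
  have ereKF : kL * fL = (q ^ 2)⁻¹ • (fL * kL) := by
    rw [hkL, hfL, ← map_mul, relKF, map_smul, map_mul]
  have ereEF : eL * fL = fL * eL := by
    rw [heL, hfL, ← map_mul, relEF, map_mul]
  -- nontriviality and an eigenvector of kL
  haveI : Nontrivial M := IsSimpleModule.nontrivial (Uq q 0 1) M
  obtain ⟨μ₀, hμ₀⟩ := Module.End.exists_eigenvalue kL
  obtain ⟨v₀, hv₀mem, hv₀ne⟩ := hμ₀.exists_hasEigenvector
  have hv₀eig : kL v₀ = μ₀ • v₀ := Module.End.mem_eigenspace_iff.1 hv₀mem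
  -- eigenvalues of kL are nonzero
  have eig_ne : ∀ (μ : ℂ) (v : M), v ≠ 0 → kL v = μ • v → μ ≠ 0 := by
    intro μ v hv hvk hμ
    apply hv
    have : kiL (kL v) = v := by
      rw [← Module.End.mul_apply, ereKKi]; rfl
    rw [hvk, hμ, zero_smul, map_zero] at this
    exact this.symm
  have hμ₀ne : μ₀ ≠ 0 := eig_ne μ₀ v₀ hv₀ne hv₀eig
  -- q^2 and its inverse are nonzero and not roots of unity
  have hq2 : (q ^ 2 : ℂ) ≠ 0 := pow_ne_zero 2 hq0
  have hq2ru : ∀ n : ℕ, 0 < n → (q ^ 2 : ℂ) ^ n ≠ 1 := by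
    intro n hn h
    exact hqru (2 * n) (by omega) (by rw [pow_mul]; exact h)
  have hq2i : ((q ^ 2 : ℂ))⁻¹ ≠ 0 := inv_ne_zero hq2
  have hq2iru : ∀ n : ℕ, 0 < n → ((q ^ 2 : ℂ)⁻¹) ^ n ≠ 1 := by
    intro n hn h
    apply hq2ru n hn
    rw [← inv_pow] at h
    have := congrArg (· * (q ^ 2 : ℂ) ^ n) h
    simpa [inv_mul_cancel₀ (pow_ne_zero n hq2)] using this.symm
  -- first kill E
  obtain ⟨w₁, hw₁ne, hw₁E, ⟨μ₁, hμ₁ne, hw₁eig⟩, -⟩ :=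
    chain_lemma kL eL (q ^ 2) hq2 hq2ru ereKE μ₀ hμ₀ne v₀ hv₀ne hv₀eig
  -- then kill F
  obtain ⟨w, hwne, hwF, ⟨lam, hlamne, hweig⟩, n, hwn⟩ :=
    chain_lemma kL fL ((q ^ 2)⁻¹) hq2i hq2iru ereKF μ₁ hμ₁ne w₁ hw₁ne hw₁eig
  -- w is also killed by E, since E and F commute
  have hwE : eL w = 0 := by
    have hcomm : eL * fL ^ n = fL ^ n * eL := (Commute.pow_right ereEF n).symm ▸ rfl
    rw [hwn, ← Module.End.mul_apply, hcomm, Module.End.mul_apply, hw₁E, map_zero]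
  -- K⁻¹ acts on w by lam⁻¹
  have hwKi : kiL w = lam⁻¹ • w := by
    have h1 : kiL (kL w) = w := by
      rw [← Module.End.mul_apply, ereKKi]; rfl
    rw [hweig, map_smul] at h1
    have := congrArg (fun x => lam⁻¹ • x) h1
    simpa [smul_smul, inv_mul_cancel₀ hlamne] using this
  -- every element of M is a ℂ-multiple of w
  have hall : ∀ u : Uq q 0 1, u • w ∈ Submodule.span ℂ ({w} : Set M) := by
    intro u
    obtain ⟨x, rfl⟩ := RingQuot.mkAlgHom_surjective ℂ (UqRel q 0 1) u
    induction x with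
    | grade0 r =>
      rw [AlgHom.commutes, algebraMap_smul]
      exact Submodule.smul_mem _ _ (Submodule.mem_span_singleton_self w)
    | grade1 i =>
      fin_cases i
      · show genK q 0 1 • w ∈ _
        rw [← actK, hweig]
        exact Submodule.smul_mem _ _ (Submodule.mem_span_singleton_self w)
      · show genKinv q 0 1 • w ∈ _
        rw [← actKi, hwKi]
        exact Submodule.smul_mem _ _ (Submodule.mem_span_singleton_self w)
      · show genE q 0 1 • w ∈ _
        rw [← actE, hwE]
        exact Submodule.zero_mem _
      · show genF q 0 1 • w ∈ _
        rw [← actF, hwF]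
        exact Submodule.zero_mem _
    | mul a b ha hb =>
      rw [map_mul, mul_smul]
      obtain ⟨c, hc⟩ := Submodule.mem_span_singleton.1 hb
      rw [← hc, smul_comm]
      exact Submodule.smul_mem _ _ ha
    | add a b ha hb =>
      rw [map_add, add_smul]
      exact Submodule.add_mem _ ha hb
  have hspan : ∀ m : M, ∃ c : ℂ, c • w = m := by
    intro m
    have hm : m ∈ Submodule.span (Uq q 0 1) ({w} : Set M) := by
      rw [IsSimpleModule.span_singleton_eq_top (Uq q 0 1) hwne]
      trivial
    obtain ⟨u, hu⟩ := Submodule.mem_span_singleton.1 hm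
    have := hall u
    rw [hu] at this
    exact Submodule.mem_span_singleton.1 this
  refine ⟨finrank_eq_one w hwne hspan, lam, hlamne, ?_⟩
  intro v
  obtain ⟨c, rfl⟩ := hspan v
  refine ⟨?_, ?_, ?_⟩
  · rw [← actK, map_smul, hweig, smul_comm]
  · rw [← actE, map_smul, hwE, smul_zero]
  · rw [← actF, map_smul, hwF, smul_zero]

end
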